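/- Let L > 0, κ > 0, w : [0,L] → ℝ continuous, and let μ be a finite Borel measure on [0,L] with total mass η := μ([0,L]) satisfying 0 < η ≤ 1. Let p* ∈ C([0,L]) be the unique fixed point of Ψ_{w,μ}. Then for all x₁, x₂ ∈ [0,L], |p*(x₁) − p*(x₂)| ≤ (1/2)|w(x₁) − w(x₂)|. In particular, p* inherits (one half of) any modulus of continuity of w. -/

import Mathlib

open MeasureTheory

/-- The market-price map `Ψ_{w,μ}(p)(x) = a + c·p̄ − (1/2)(a + c·p̄ − w(x))⁺`,
with `η = μ([0,L])`, `a = 1/(1+κη)`, `c = 1 − a` and `p̄ = (1/η)∫ p dμ`. -/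
noncomputable def Psi (L κ : ℝ) (w : C(Set.Icc (0:ℝ) L, ℝ))
    (μ : Measure (Set.Icc (0:ℝ) L)) (p : C(Set.Icc (0:ℝ) L, ℝ))
    (x : Set.Icc (0:ℝ) L) : ℝ :=
  let η : ℝ := (μ Set.univ).toReal
  let a : ℝ := 1 / (1 + κ * η)
  let c : ℝ := 1 - a
  let pbar : ℝ := (1 / η) * ∫ y, p y ∂μ
  a + c * pbar - (1 / 2) * max (a + c * pbar - w x) 0

/-- Spatial modulus of continuity of the fixed point of `Ψ_{w,μ}`:
`|p*(x₁) − p*(x₂)| ≤ (1/2)|w(x₁) − w(x₂)|`. -/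
theorem Psi_fixedPoint_spatial_modulus (L κ : ℝ) (hL : 0 < L) (hκ : 0 < κ)
    (w : C(Set.Icc (0:ℝ) L, ℝ))
    (μ : Measure (Set.Icc (0:ℝ) L)) [IsFiniteMeasure μ]
    (hη : 0 < (μ Set.univ).toReal) (hη1 : (μ Set.univ).toReal ≤ 1)
    (pstar : C(Set.Icc (0:ℝ) L, ℝ))
    (hfix : ∀ x : Set.Icc (0:ℝ) L, Psi L κ w μ pstar x = pstar x) :
    ∀ x₁ x₂ : Set.Icc (0:ℝ) L,
      |pstar x₁ - pstar x₂| ≤ (1 / 2) * |w x₁ - w x₂| := by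
  intro x₁ x₂
  rw [← hfix x₁, ← hfix x₂]
  unfold Psi
  dsimp only
  set M := 1 / (1 + κ * (μ Set.univ).toReal) +
    (1 - 1 / (1 + κ * (μ Set.univ).toReal)) *
      ((1 / (μ Set.univ).toReal) * ∫ y, pstar y ∂μ) with hM
  have h : (M - (1/2) * max (M - w x₁) 0) - (M - (1/2) * max (M - w x₂) 0)
      = (1/2) * (max (M - w x₂) 0 - max (M - w x₁) 0) := by ring
  simp only [h]
  rw [abs_mul, abs_of_pos (by norm_num : (0:ℝ) < 1/2)]
  have key : |max (M - w x₂) 0 - max (M - w x₁) 0| ≤ |w x₁ - w x₂| := by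
    have h2 := abs_max_sub_max_le_abs (M - w x₂) (M - w x₁) 0
    have h3 : (M - w x₂) - (M - w x₁) = w x₁ - w x₂ := by ring
    rwa [h3] at h2
  exact mul_le_mul_of_nonneg_left key (by norm_num)
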